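/- Let P be the group with presentation ⟨a, e, f | e² = 1, f² = 1, a e a⁻¹ = f, a f a⁻¹ = e⟩. Then P is isomorphic to the semidirect product (ℤ/2 * ℤ/2) ⋊ ℤ, where ℤ/2 * ℤ/2 is the free product of two cyclic groups of order 2 and the generator of ℤ acts by the automorphism exchanging the generators of the two free factors. -/

import Mathlib

/-- Relators of the presentation `⟨a, e, f | e² = 1, f² = 1, a e a⁻¹ = f, a f a⁻¹ = e⟩`,
where the generators are `a = of 0`, `e = of 1`, `f = of 2`. -/
def stmt8Rels : Set (FreeGroup (Fin 3)) :=
  {FreeGroup.of 1 * FreeGroup.of 1,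
   FreeGroup.of 2 * FreeGroup.of 2,
   FreeGroup.of 0 * FreeGroup.of 1 * (FreeGroup.of 0)⁻¹ * (FreeGroup.of 2)⁻¹,
   FreeGroup.of 0 * FreeGroup.of 2 * (FreeGroup.of 0)⁻¹ * (FreeGroup.of 1)⁻¹}

open Monoid Multiplicative

/-- generator of `Multiplicative (ZMod 2)` -/
def stmt8g : Multiplicative (ZMod 2) := Multiplicative.ofAdd 1

/-- hom from `Multiplicative (ZMod 2)` sending the generator to an element of order dividing 2 -/
noncomputable def stmt8ord2Hom {P : Type*} [Group P] (p : P) (hp : p * p = 1) :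
    Multiplicative (ZMod 2) →* P :=
  AddMonoidHom.toMultiplicativeLeft
    (ZMod.lift 2 ⟨zmultiplesHom (Additive P) (Additive.ofMul p), by
      show ((2:ℕ):ℤ) • Additive.ofMul p = 0
      have : p ^ (2:ℤ) = 1 := by rw [show (2:ℤ) = 1 + 1 by norm_num, zpow_add, zpow_one, hp]
      exact this⟩)

lemma stmt8ord2Hom_g {P : Type*} [Group P] (p : P) (hp : p * p = 1) :
    stmt8ord2Hom p hp stmt8g = p := by
  have h1 : Multiplicative.toAdd stmt8g = (((1:ℤ) : ZMod 2)) := by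
    rw [Int.cast_one]; rfl
  simp only [stmt8ord2Hom, AddMonoidHom.coe_toMultiplicativeLeft, Function.comp_apply, h1,
    ZMod.lift_coe]
  simp

lemma stmt8zmod2_cases (x : Multiplicative (ZMod 2)) : x = 1 ∨ x = stmt8g := by
  revert x; decide

/-- The group `⟨a, e, f | e² = 1, f² = 1, a e a⁻¹ = f, a f a⁻¹ = e⟩` is isomorphic to
`(ℤ/2 * ℤ/2) ⋊ ℤ`, where the generator of `ℤ` acts on the free product `ℤ/2 * ℤ/2` by the
automorphism `σ` exchanging the generators of the two free factors. -/
theorem stmt8 (σ : MulAut (Monoid.Coprod (Multiplicative (ZMod 2)) (Multiplicative (ZMod 2))))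
    (hσl : ∀ x : Multiplicative (ZMod 2), σ (Monoid.Coprod.inl x) = Monoid.Coprod.inr x)
    (hσr : ∀ x : Multiplicative (ZMod 2), σ (Monoid.Coprod.inr x) = Monoid.Coprod.inl x) :
    Nonempty (PresentedGroup stmt8Rels ≃*
      (Monoid.Coprod (Multiplicative (ZMod 2)) (Multiplicative (ZMod 2)))
        ⋊[zpowersHom _ σ] Multiplicative ℤ) := by
  set N := Monoid.Coprod (Multiplicative (ZMod 2)) (Multiplicative (ZMod 2)) with hN
  set G := N ⋊[zpowersHom _ σ] Multiplicative ℤ with hG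
  -- forward map
  set F : Fin 3 → G := ![SemidirectProduct.inr (ofAdd 1),
    SemidirectProduct.inl (Coprod.inl stmt8g),
    SemidirectProduct.inl (Coprod.inr stmt8g)] with hF
  have hσ1 : (zpowersHom (MulAut N) σ) (ofAdd 1) = σ := by simp [zpowersHom]
  have hgg : stmt8g * stmt8g = 1 := by decide
  have key : ∀ r ∈ stmt8Rels, FreeGroup.lift F r = 1 := by
    intro r hr
    rcases hr with rfl | rfl | rfl | rfl
    · simp only [map_mul, FreeGroup.lift_apply_of, hF]
      show SemidirectProduct.inl (Coprod.inl stmt8g) * SemidirectProduct.inl (Coprod.inl stmt8g) = 1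
      rw [← map_mul, ← map_mul, hgg]; simp
    · simp only [map_mul, FreeGroup.lift_apply_of, hF]
      show SemidirectProduct.inl (Coprod.inr stmt8g) * SemidirectProduct.inl (Coprod.inr stmt8g) = 1
      rw [← map_mul, ← map_mul, hgg]; simp
    · simp only [map_mul, map_inv, FreeGroup.lift_apply_of, hF]
      show SemidirectProduct.inr (ofAdd (1:ℤ)) * SemidirectProduct.inl (Coprod.inl stmt8g) *
        (SemidirectProduct.inr (ofAdd (1:ℤ)))⁻¹ * (SemidirectProduct.inl (Coprod.inr stmt8g))⁻¹ = 1
      rw [mul_inv_eq_one, ← map_inv, ← SemidirectProduct.inl_aut, hσ1, hσl]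
    · simp only [map_mul, map_inv, FreeGroup.lift_apply_of, hF]
      show SemidirectProduct.inr (ofAdd (1:ℤ)) * SemidirectProduct.inl (Coprod.inr stmt8g) *
        (SemidirectProduct.inr (ofAdd (1:ℤ)))⁻¹ * (SemidirectProduct.inl (Coprod.inl stmt8g))⁻¹ = 1
      rw [mul_inv_eq_one, ← map_inv, ← SemidirectProduct.inl_aut, hσ1, hσr]
  set Φ : PresentedGroup stmt8Rels →* G := PresentedGroup.toGroup key with hΦ
  -- generators in the presented group
  set a : PresentedGroup stmt8Rels := PresentedGroup.of 0 with ha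
  set e : PresentedGroup stmt8Rels := PresentedGroup.of 1 with he
  set f : PresentedGroup stmt8Rels := PresentedGroup.of 2 with hf
  have rel : ∀ r ∈ stmt8Rels, PresentedGroup.mk stmt8Rels r = 1 := fun r hr =>
    (QuotientGroup.eq_one_iff _).2 (Subgroup.subset_normalClosure hr)
  have ree : e * e = 1 := by
    have := rel _ (Or.inl rfl); rw [map_mul] at this; exact this
  have rff : f * f = 1 := by
    have := rel _ (Or.inr (Or.inl rfl)); rw [map_mul] at this; exact this
  have raea : a * e * a⁻¹ = f := by
    have := rel _ (Or.inr (Or.inr (Or.inl rfl)))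
    simp only [map_mul, map_inv] at this
    exact eq_of_mul_inv_eq_one this
  have rafa : a * f * a⁻¹ = e := by
    have := rel _ (Or.inr (Or.inr (Or.inr rfl)))
    simp only [map_mul, map_inv] at this
    exact eq_of_mul_inv_eq_one this
  -- backward map
  set cE := stmt8ord2Hom e ree with hcE
  set cF := stmt8ord2Hom f rff with hcF
  set cN : N →* PresentedGroup stmt8Rels := Coprod.lift cE cF with hcN
  set cH : Multiplicative ℤ →* PresentedGroup stmt8Rels := zpowersHom _ a with hcH
  have hconj1 : ∀ n : N, cN (σ n) = a * cN n * a⁻¹ := by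
    have hcEg : cE stmt8g = e := stmt8ord2Hom_g _ _
    have hcFg : cF stmt8g = f := stmt8ord2Hom_g _ _
    have : cN.comp σ.toMonoidHom = (MulAut.conj a).toMonoidHom.comp cN := by
      apply Coprod.hom_ext <;> refine MonoidHom.ext fun x => ?_ <;>
        rcases stmt8zmod2_cases x with rfl | rfl <;>
        simp only [MonoidHom.comp_apply, MulEquiv.coe_toMonoidHom, MulAut.conj_apply, hcN]
      · simp
      · rw [hσl, Coprod.lift_apply_inl, Coprod.lift_apply_inr, hcEg, hcFg, raea]
      · simp
      · rw [hσr, Coprod.lift_apply_inl, Coprod.lift_apply_inr, hcEg, hcFg, rafa]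
    intro n
    exact DFunLike.congr_fun this n
  have hconj1' : ∀ n : N, cN (σ⁻¹ n) = a⁻¹ * cN n * a := by
    intro n
    have := hconj1 (σ⁻¹ n)
    rw [MulAut.apply_inv_self] at this
    rw [this]; group
  have hconj : ∀ (k : ℤ) (n : N), cN ((σ ^ k) n) = a ^ k * cN n * a ^ (-k) := by
    intro k
    induction k using Int.induction_on with
    | zero => intro n; simp
    | succ i ih =>
        intro n
        have h1 : (σ ^ ((i : ℤ) + 1)) n = (σ ^ (i : ℤ)) (σ n) := by
          rw [zpow_add_one]; rfl
        rw [h1, ih (σ n), hconj1 n]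
        rw [zpow_add_one, neg_add, zpow_add]
        group
    | pred i ih =>
        intro n
        have h1 : (σ ^ (-(i : ℤ) - 1)) n = (σ ^ (-(i : ℤ))) (σ⁻¹ n) := by
          rw [zpow_sub_one]; rfl
        rw [h1, ih (σ⁻¹ n), hconj1' n]
        group
  have hcompat : ∀ h : Multiplicative ℤ,
      cN.comp ((zpowersHom (MulAut N) σ) h).toMonoidHom =
        (MulAut.conj (cH h)).toMonoidHom.comp cN := by
    intro h
    refine MonoidHom.ext fun n => ?_
    simp only [MonoidHom.comp_apply, MulEquiv.coe_toMonoidHom, MulAut.conj_apply]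
    show cN ((σ ^ h.toAdd) n) = a ^ h.toAdd * cN n * (a ^ h.toAdd)⁻¹
    rw [hconj h.toAdd n, zpow_neg]
  set Ψ : G →* PresentedGroup stmt8Rels := SemidirectProduct.lift cN cH hcompat with hΨ
  have h1 : Ψ.comp Φ = MonoidHom.id _ := by
    apply PresentedGroup.ext
    intro x
    fin_cases x <;>
      simp only [MonoidHom.comp_apply, MonoidHom.id_apply, hΦ, PresentedGroup.toGroup.of, hF]
    · show Ψ (SemidirectProduct.inr (ofAdd 1)) = a
      rw [hΨ, SemidirectProduct.lift_inr]
      simp [hcH, zpowersHom]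
    · show Ψ (SemidirectProduct.inl (Coprod.inl stmt8g)) = e
      rw [hΨ, SemidirectProduct.lift_inl, hcN, Coprod.lift_apply_inl]
      exact stmt8ord2Hom_g _ _
    · show Ψ (SemidirectProduct.inl (Coprod.inr stmt8g)) = f
      rw [hΨ, SemidirectProduct.lift_inl, hcN, Coprod.lift_apply_inr]
      exact stmt8ord2Hom_g _ _
  have h2 : Φ.comp Ψ = MonoidHom.id _ := by
    apply SemidirectProduct.hom_ext
    · apply Coprod.hom_ext
      · refine MonoidHom.ext fun x => ?_
        rcases stmt8zmod2_cases x with rfl | rfl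
        · simp
        · show Φ (Ψ (SemidirectProduct.inl (Coprod.inl stmt8g)))
            = SemidirectProduct.inl (Coprod.inl stmt8g)
          rw [hΨ, SemidirectProduct.lift_inl, hcN, Coprod.lift_apply_inl, hcE, stmt8ord2Hom_g]
          show Φ e = SemidirectProduct.inl (Coprod.inl stmt8g)
          rw [hΦ, he, PresentedGroup.toGroup.of]; rfl
      · refine MonoidHom.ext fun x => ?_
        rcases stmt8zmod2_cases x with rfl | rfl
        · simp
        · show Φ (Ψ (SemidirectProduct.inl (Coprod.inr stmt8g)))
            = SemidirectProduct.inl (Coprod.inr stmt8g)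
          rw [hΨ, SemidirectProduct.lift_inl, hcN, Coprod.lift_apply_inr, hcF, stmt8ord2Hom_g]
          show Φ f = SemidirectProduct.inl (Coprod.inr stmt8g)
          rw [hΦ, hf, PresentedGroup.toGroup.of]; rfl
    · apply MonoidHom.ext_mint
      simp only [MonoidHom.comp_apply, MonoidHom.id_apply]
      rw [hΨ, SemidirectProduct.lift_inr]
      have : cH (ofAdd 1) = a := by simp [hcH, zpowersHom]
      rw [this, hΦ, ha, PresentedGroup.toGroup.of]; rfl
  exact ⟨MonoidHom.toMulEquiv Φ Ψ h1 h2⟩
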